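/- Let F : F_2^n → F_2^n be a quadratic APN function with n even, and for each nonzero b let 2^{(n+l_b)/2} be the amplitude of the component F_b. Then Σ_{b ≠ 0} 2^{l_b} = 2(2^n − 1). -/
import Mathlib


open Finset

/-- `Vec n` is the vector space `F_2^n`. -/
abbrev Vec (n : ℕ) := Fin n → ZMod 2

/-- The standard dot product on `F_2^n`. -/
def dotp {n : ℕ} (a b : Vec n) : ZMod 2 := ∑ i, a i * b i

/-- The difference (derivative) function `D_{F,a}(x) = F(x) + F(x+a)`. -/
def Dder {n : ℕ} (F : Vec n → Vec n) (a x : Vec n) : Vec n := F x + F (x + a)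

/-- The linear hyperplane `H_b = {x : ⟨b,x⟩ = 0}`. -/
def Hyp {n : ℕ} (b : Vec n) : Set (Vec n) := {x | dotp b x = 0}

/-- The affine hyperplane `H̄_b = {x : ⟨b,x⟩ = 1}`. -/
def HypBar {n : ℕ} (b : Vec n) : Set (Vec n) := {x | dotp b x = 1}

/-- `T_b = {a : image(D_{F,a}) = H_b} ∪ {0}`. -/
def Tset {n : ℕ} (F : Vec n → Vec n) (b : Vec n) : Set (Vec n) :=
  {a | Set.range (Dder F a) = Hyp b} ∪ {0}

/-- `T̄_b = {a : image(D_{F,a}) = H̄_b}`. -/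
def TsetBar {n : ℕ} (F : Vec n → Vec n) (b : Vec n) : Set (Vec n) :=
  {a | Set.range (Dder F a) = HypBar b}

/-- `V_b = T_b ∪ T̄_b`. -/
def Vset {n : ℕ} (F : Vec n → Vec n) (b : Vec n) : Set (Vec n) := Tset F b ∪ TsetBar F b

/-- `F` is quadratic: all second derivatives are constant (algebraic degree ≤ 2). -/
def IsQuadratic {n m : ℕ} (F : Vec n → Vec m) : Prop :=
  ∀ a₁ a₂ : Vec n, ∃ c : Vec m, ∀ x, F (x + a₁ + a₂) + F (x + a₁) + F (x + a₂) + F x = c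

/-- `F` is APN: every equation `F(x) + F(x+a) = b`, `a ≠ 0`, has at most 2 solutions. -/
def IsAPN {n : ℕ} (F : Vec n → Vec n) : Prop :=
  ∀ a : Vec n, a ≠ 0 → ∀ b : Vec n, Nat.card {x : Vec n // F x + F (x + a) = b} ≤ 2

/-- The Walsh transform `W_F(b,a) = Σ_x (-1)^{⟨b,F(x)⟩ + ⟨a,x⟩}`. -/
def Walsh {n m : ℕ} (F : Vec n → Vec m) (b : Vec m) (a : Vec n) : ℤ :=
  ∑ x : Vec n, (-1 : ℤ) ^ ((dotp b (F x) + dotp a x).val)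

/-- The component `F_b` is bent: `|W_F(b,a)| = 2^{n/2}` for all `a`. -/
def IsBent {n m : ℕ} (F : Vec n → Vec m) (b : Vec m) : Prop :=
  ∀ a : Vec n, (Walsh F b a) ^ 2 = 2 ^ n

/-- The set `N_F` of non-trivial non-bent components of `F`. -/
def NF {n m : ℕ} (F : Vec n → Vec m) : Set (Vec m) := {b | b ≠ 0 ∧ ¬ IsBent F b}

/-- A vector space partition of `F_q^n`: a collection of nonzero subspaces such that
every nonzero vector lies in exactly one member. -/
def IsVSP {K : Type} [Field K] {n : ℕ} (𝒱 : Finset (Submodule K (Fin n → K))) : Prop :=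
  (∀ S ∈ 𝒱, S ≠ ⊥) ∧
  ∀ x : Fin n → K, x ≠ 0 → ∃! S : Submodule K (Fin n → K), S ∈ 𝒱 ∧ x ∈ S

/-- A blocking set of `PG(m,2)` (identified with `F_2^{m+1} \ {0}`) with respect to
`k`-spaces (nonzero parts of `(k+1)`-dimensional subspaces). -/
def PGBlocking (m k : ℕ) (B : Set (Fin (m + 1) → ZMod 2)) : Prop :=
  0 ∉ B ∧ ∀ S : Submodule (ZMod 2) (Fin (m + 1) → ZMod 2),
    Module.finrank (ZMod 2) S = k + 1 → ∃ x ∈ B, x ∈ S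

/-- `F_b` has amplitude `2^{(n+k)/2}`. -/
def HasAmp {n m : ℕ} (F : Vec n → Vec m) (b : Vec m) (k : ℕ) : Prop :=
  (∀ a, (Walsh F b a) ^ 2 = 0 ∨ (Walsh F b a) ^ 2 = 2 ^ (n + k)) ∧
  ∃ a, (Walsh F b a) ^ 2 = 2 ^ (n + k)

def ee (u : ZMod 2) : ℤ := (-1) ^ u.val

lemma ee_add (u v : ZMod 2) : ee (u + v) = ee u * ee v := by revert u v; decide
lemma ee_one_add (u : ZMod 2) : ee (1 + u) = - ee u := by revert u; decide

lemma walsh_eq {n m : ℕ} (F : Vec n → Vec m) (b : Vec m) (a : Vec n) :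
    Walsh F b a = ∑ x : Vec n, ee (dotp b (F x) + dotp a x) := rfl

lemma dotp_add_left {n : ℕ} (a c x : Vec n) : dotp (a + c) x = dotp a x + dotp c x := by
  simp [dotp, add_mul, Finset.sum_add_distrib]

lemma dotp_add_right {n : ℕ} (a x y : Vec n) : dotp a (x + y) = dotp a x + dotp a y := by
  simp [dotp, mul_add, Finset.sum_add_distrib]

lemma dotp_comm {n : ℕ} (a x : Vec n) : dotp a x = dotp x a := by
  simp [dotp, mul_comm]

lemma card_vec (n : ℕ) : Fintype.card (Vec n) = 2 ^ n := by simp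

lemma char_sum {n : ℕ} (x : Vec n) :
    ∑ a : Vec n, ee (dotp a x) = if x = 0 then (2:ℤ) ^ n else 0 := by
  split_ifs with hx
  · subst hx
    have h1 : ∀ a : Vec n, dotp a 0 = 0 := by intro a; simp [dotp]
    simp [h1, ee, card_vec]
  · obtain ⟨i, hi⟩ := Function.ne_iff.mp hx
    have hx1 : x i = 1 := by
      have : ∀ u : ZMod 2, u ≠ (0:ZMod 2) → u = 1 := by decide
      exact this _ (by simpa using hi)
    set a₀ : Vec n := Pi.single i 1 with ha₀
    have hd : dotp a₀ x = 1 := by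
      have : ∀ j, a₀ j * x j = (Pi.single i (x i) : Vec n) j := by
        intro j
        by_cases hj : j = i
        · subst hj; simp [ha₀]
        · simp [ha₀, Pi.single_eq_of_ne hj]
      rw [dotp, Finset.sum_congr rfl fun j _ => this j, Finset.sum_pi_single']
      simp [hx1]
    have key : ∑ a : Vec n, ee (dotp a x) = ∑ a : Vec n, ee (dotp (a₀ + a) x) :=
      (Fintype.sum_equiv (Equiv.addLeft a₀) _ _ (fun a => rfl)).symm
    have key2 : ∀ a : Vec n, ee (dotp (a₀ + a) x) = - ee (dotp a x) := by
      intro a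
      rw [dotp_add_left, hd, ee_one_add]
    rw [Finset.sum_congr rfl (fun a _ => key2 a), Finset.sum_neg_distrib] at key
    linarith

lemma expand2 {α : Type} [Fintype α] (g : α → ℤ) :
    (∑ x : α, g x) ^ 2 = ∑ x : α, ∑ y : α, g x * g y := by
  rw [sq, Finset.sum_mul_sum]

lemma expand4 {α : Type} [Fintype α] (g : α → ℤ) :
    (∑ x : α, g x) ^ 4 = ∑ x : α, ∑ y : α, ∑ z : α, ∑ w : α, g x * g z * (g y * g w) := by
  rw [show (∑ x : α, g x)^4
      = ((∑ x : α, g x) * (∑ x : α, g x)) * ((∑ x : α, g x) * (∑ x : α, g x)) by ring]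
  simp only [Finset.sum_mul_sum]

lemma neg_vec {n : ℕ} (v : Vec n) : -v = v := by
  funext i
  have : ∀ u : ZMod 2, -u = u := by decide
  simpa using this (v i)

lemma add_self_vec {n : ℕ} (v : Vec n) : v + v = 0 := by
  have h := neg_add_cancel v
  rwa [neg_vec] at h

lemma vec_add_eq_zero_iff {n : ℕ} (u v : Vec n) : u + v = 0 ↔ u = v := by
  rw [add_eq_zero_iff_eq_neg, neg_vec]

lemma parseval {n : ℕ} (F : Vec n → Vec n) (b : Vec n) :
    ∑ a : Vec n, (Walsh F b a) ^ 2 = 2 ^ (2 * n) := by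
  have h1 : ∀ a : Vec n, (Walsh F b a) ^ 2 =
      ∑ x : Vec n, ∑ y : Vec n,
        ee (dotp b (F x) + dotp b (F y)) * ee (dotp a (x + y)) := by
    intro a
    rw [walsh_eq, expand2]
    refine Finset.sum_congr rfl fun x _ => Finset.sum_congr rfl fun y _ => ?_
    simp only [ee_add, dotp_add_right]
    ring
  calc ∑ a : Vec n, (Walsh F b a) ^ 2
      = ∑ a : Vec n, ∑ x : Vec n, ∑ y : Vec n,
          ee (dotp b (F x) + dotp b (F y)) * ee (dotp a (x + y)) :=
        Finset.sum_congr rfl fun a _ => h1 a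
    _ = ∑ x : Vec n, ∑ a : Vec n, ∑ y : Vec n,
          ee (dotp b (F x) + dotp b (F y)) * ee (dotp a (x + y)) := Finset.sum_comm
    _ = ∑ x : Vec n, ∑ y : Vec n, ∑ a : Vec n,
          ee (dotp b (F x) + dotp b (F y)) * ee (dotp a (x + y)) :=
        Finset.sum_congr rfl fun x _ => Finset.sum_comm
    _ = ∑ x : Vec n, ∑ y : Vec n,
          ee (dotp b (F x) + dotp b (F y)) * (if x + y = 0 then (2:ℤ)^n else 0) := by
        refine Finset.sum_congr rfl fun x _ => Finset.sum_congr rfl fun y _ => ?_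
        rw [← Finset.mul_sum]
        congr 1
        exact char_sum (x + y)
    _ = ∑ x : Vec n, ∑ y : Vec n,
          (if x = y then ee (dotp b (F x) + dotp b (F y)) * (2:ℤ)^n else 0) := by
        refine Finset.sum_congr rfl fun x _ => Finset.sum_congr rfl fun y _ => ?_
        rw [mul_ite, mul_zero]
        exact if_congr (vec_add_eq_zero_iff x y) rfl rfl
    _ = ∑ x : Vec n, ee (dotp b (F x) + dotp b (F x)) * (2:ℤ)^n := by
        refine Finset.sum_congr rfl fun x _ => ?_
        rw [Finset.sum_ite_eq]
        simp
    _ = ∑ x : Vec n, (2:ℤ)^n := by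
        refine Finset.sum_congr rfl fun x _ => ?_
        have : dotp b (F x) + dotp b (F x) = 0 := by
          have : ∀ u : ZMod 2, u + u = 0 := by decide
          exact this _
        rw [this]
        norm_num [ee]
    _ = 2 ^ (2 * n) := by
        rw [Finset.sum_const, Finset.card_univ, card_vec]
        push_cast
        ring

lemma fourth_b {n : ℕ} (F : Vec n → Vec n) (b : Vec n) :
    ∑ a : Vec n, (Walsh F b a) ^ 4 =
      2 ^ n * ∑ x : Vec n, ∑ y : Vec n, ∑ z : Vec n,
        ee (dotp b (F x + F y + F z + F (x + y + z))) := by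
  have h1 : ∀ a : Vec n, (Walsh F b a) ^ 4 =
      ∑ x : Vec n, ∑ y : Vec n, ∑ z : Vec n, ∑ w : Vec n,
        ee (dotp b (F x + F y + F z + F w)) * ee (dotp a (x + y + z + w)) := by
    intro a
    rw [walsh_eq, expand4]
    refine Finset.sum_congr rfl fun x _ => Finset.sum_congr rfl fun y _ =>
      Finset.sum_congr rfl fun z _ => Finset.sum_congr rfl fun w _ => ?_
    simp only [ee_add, dotp_add_right]
    ring
  calc ∑ a : Vec n, (Walsh F b a) ^ 4
      = ∑ a : Vec n, ∑ x : Vec n, ∑ y : Vec n, ∑ z : Vec n, ∑ w : Vec n,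
          ee (dotp b (F x + F y + F z + F w)) * ee (dotp a (x + y + z + w)) :=
        Finset.sum_congr rfl fun a _ => h1 a
    _ = ∑ x : Vec n, ∑ a : Vec n, ∑ y : Vec n, ∑ z : Vec n, ∑ w : Vec n,
          ee (dotp b (F x + F y + F z + F w)) * ee (dotp a (x + y + z + w)) := Finset.sum_comm
    _ = ∑ x : Vec n, ∑ y : Vec n, ∑ a : Vec n, ∑ z : Vec n, ∑ w : Vec n,
          ee (dotp b (F x + F y + F z + F w)) * ee (dotp a (x + y + z + w)) :=
        Finset.sum_congr rfl fun x _ => Finset.sum_comm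
    _ = ∑ x : Vec n, ∑ y : Vec n, ∑ z : Vec n, ∑ a : Vec n, ∑ w : Vec n,
          ee (dotp b (F x + F y + F z + F w)) * ee (dotp a (x + y + z + w)) :=
        Finset.sum_congr rfl fun x _ => Finset.sum_congr rfl fun y _ => Finset.sum_comm
    _ = ∑ x : Vec n, ∑ y : Vec n, ∑ z : Vec n, ∑ w : Vec n, ∑ a : Vec n,
          ee (dotp b (F x + F y + F z + F w)) * ee (dotp a (x + y + z + w)) :=
        Finset.sum_congr rfl fun x _ => Finset.sum_congr rfl fun y _ =>
          Finset.sum_congr rfl fun z _ => Finset.sum_comm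
    _ = ∑ x : Vec n, ∑ y : Vec n, ∑ z : Vec n, ∑ w : Vec n,
          ee (dotp b (F x + F y + F z + F w)) * (if x + y + z + w = 0 then (2:ℤ)^n else 0) := by
        refine Finset.sum_congr rfl fun x _ => Finset.sum_congr rfl fun y _ =>
          Finset.sum_congr rfl fun z _ => Finset.sum_congr rfl fun w _ => ?_
        rw [← Finset.mul_sum, char_sum]
    _ = ∑ x : Vec n, ∑ y : Vec n, ∑ z : Vec n, ∑ w : Vec n,
          (if x + y + z = w then ee (dotp b (F x + F y + F z + F w)) * (2:ℤ)^n else 0) := by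
        refine Finset.sum_congr rfl fun x _ => Finset.sum_congr rfl fun y _ =>
          Finset.sum_congr rfl fun z _ => Finset.sum_congr rfl fun w _ => ?_
        rw [mul_ite, mul_zero]
        exact if_congr (vec_add_eq_zero_iff (x + y + z) w) rfl rfl
    _ = ∑ x : Vec n, ∑ y : Vec n, ∑ z : Vec n,
          ee (dotp b (F x + F y + F z + F (x + y + z))) * (2:ℤ)^n := by
        refine Finset.sum_congr rfl fun x _ => Finset.sum_congr rfl fun y _ =>
          Finset.sum_congr rfl fun z _ => ?_
        rw [Finset.sum_ite_eq]
        simp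
    _ = 2 ^ n * ∑ x : Vec n, ∑ y : Vec n, ∑ z : Vec n,
          ee (dotp b (F x + F y + F z + F (x + y + z))) := by
        rw [Finset.mul_sum]
        refine Finset.sum_congr rfl fun x _ => ?_
        rw [Finset.mul_sum]
        refine Finset.sum_congr rfl fun y _ => ?_
        rw [Finset.mul_sum]
        refine Finset.sum_congr rfl fun z _ => ?_
        ring

lemma fiber_card {n : ℕ} (F : Vec n → Vec n) (ha : IsAPN F) {a : Vec n} (hA : a ≠ 0)
    (x : Vec n) :
    (Finset.univ.filter fun z : Vec n => Dder F a x = Dder F a z).card = 2 := by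
  set s := Finset.univ.filter fun z : Vec n => Dder F a x = Dder F a z with hs
  have hle : s.card ≤ 2 := by
    have h1 := ha a hA (Dder F a x)
    rw [Nat.card_eq_fintype_card, Fintype.card_subtype] at h1
    have : s = Finset.univ.filter fun z : Vec n => F z + F (z + a) = Dder F a x := by
      apply Finset.filter_congr
      intro z _
      constructor
      · intro h; exact h.symm
      · intro h; exact h.symm
    rw [this]
    exact h1
  have hxa : x ≠ x + a := by
    intro h
    exact hA (by simpa using (left_eq_add.mp h))
  have hmem1 : x ∈ s := by simp [hs]
  have hmem2 : x + a ∈ s := by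
    simp only [hs, Finset.mem_filter, Finset.mem_univ, true_and]
    show F x + F (x + a) = F (x + a) + F (x + a + a)
    rw [add_assoc, add_self_vec, add_zero, add_comm]
  have hge : 2 ≤ s.card := by
    have : ({x, x + a} : Finset (Vec n)) ⊆ s := by
      intro t ht
      rcases Finset.mem_insert.mp ht with h | h
      · subst h; exact hmem1
      · rw [Finset.mem_singleton.mp h]; exact hmem2
    have hc : ({x, x + a} : Finset (Vec n)).card = 2 := by
      rw [Finset.card_insert_of_notMem (by simpa using hxa), Finset.card_singleton]
    rw [← hc]
    exact Finset.card_le_card this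
  omega

lemma countC {n : ℕ} (F : Vec n → Vec n) (ha : IsAPN F) :
    ∑ x : Vec n, ∑ y : Vec n, ∑ z : Vec n,
      (if F x + F y + F z + F (x + y + z) = 0 then (1:ℤ) else 0)
    = 2 ^ (2 * n) + ((2:ℤ) ^ n - 1) * 2 ^ (n + 1) := by
  have harg : ∀ x a z : Vec n, x + (x + a) + z = z + a := by
    intro x a z
    funext i
    have : ∀ u v w : ZMod 2, u + (u + v) + w = w + v := by decide
    simpa using this (x i) (a i) (z i)
  have step1 : ∑ x : Vec n, ∑ y : Vec n, ∑ z : Vec n,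
      (if F x + F y + F z + F (x + y + z) = 0 then (1:ℤ) else 0)
      = ∑ x : Vec n, ∑ a : Vec n, ∑ z : Vec n,
        (if Dder F a x = Dder F a z then (1:ℤ) else 0) := by
    refine Finset.sum_congr rfl fun x _ => ?_
    refine (Fintype.sum_equiv (Equiv.addLeft x) _ _ fun a => ?_).symm
    refine Finset.sum_congr rfl fun z _ => ?_
    have h2 : F x + F (x + a) + F z + F (x + (x + a) + z) = 0
        ↔ Dder F a x = Dder F a z := by
      rw [harg, show F x + F (x + a) + F z + F (z + a)
            = (F x + F (x + a)) + (F z + F (z + a)) by rw [add_assoc],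
        vec_add_eq_zero_iff]
      exact Iff.rfl
    show (if Dder F a x = Dder F a z then (1:ℤ) else 0)
        = (if F x + F (x + a) + F z + F (x + (x + a) + z) = 0 then (1:ℤ) else 0)
    exact (if_congr h2 rfl rfl).symm
  rw [step1, Finset.sum_comm]
  rw [← Finset.add_sum_erase _ _ (Finset.mem_univ (0 : Vec n))]
  have hzero : ∑ x : Vec n, ∑ z : Vec n,
      (if Dder F 0 x = Dder F 0 z then (1:ℤ) else 0) = 2 ^ (2 * n) := by
    have h0 : ∀ x : Vec n, Dder F 0 x = 0 := by
      intro x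
      show F x + F (x + 0) = 0
      rw [add_zero, add_self_vec]
    simp only [h0, if_pos rfl]
    rw [Finset.sum_const, Finset.sum_const, Finset.card_univ, card_vec]
    simp
    ring
  have hrest : ∀ a ∈ Finset.univ.erase (0 : Vec n),
      ∑ x : Vec n, ∑ z : Vec n, (if Dder F a x = Dder F a z then (1:ℤ) else 0)
        = (2:ℤ) ^ n * 2 := by
    intro a haa
    have hA : a ≠ 0 := Finset.ne_of_mem_erase haa
    have hinner : ∀ x : Vec n,
        ∑ z : Vec n, (if Dder F a x = Dder F a z then (1:ℤ) else 0) = 2 := by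
      intro x
      rw [Finset.sum_boole]
      rw [fiber_card F ha hA x]
      norm_num
    rw [Finset.sum_congr rfl fun x _ => hinner x, Finset.sum_const,
      Finset.card_univ, card_vec]
    simp
  rw [hzero, Finset.sum_congr rfl hrest, Finset.sum_const,
    Finset.card_erase_of_mem (Finset.mem_univ _), Finset.card_univ, card_vec]
  have h1 : (1:ℕ) ≤ 2 ^ n := Nat.one_le_two_pow
  rw [nsmul_eq_mul]
  push_cast [h1]
  ring

lemma dotp_zero_left {n : ℕ} (v : Vec n) : dotp 0 v = 0 := by simp [dotp]

lemma total_sum {n : ℕ} (F : Vec n → Vec n) (ha : IsAPN F) :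
    ∑ b : Vec n, ∑ a : Vec n, (Walsh F b a) ^ 4
      = 2 ^ (2 * n) * (2 ^ (2 * n) + ((2:ℤ) ^ n - 1) * 2 ^ (n + 1)) := by
  have e1 : ∑ b : Vec n, ∑ x : Vec n, ∑ y : Vec n, ∑ z : Vec n,
        ee (dotp b (F x + F y + F z + F (x + y + z)))
      = ∑ x : Vec n, ∑ y : Vec n, ∑ z : Vec n,
        (if F x + F y + F z + F (x + y + z) = 0 then (2:ℤ) ^ n else 0) := by
    calc ∑ b : Vec n, ∑ x : Vec n, ∑ y : Vec n, ∑ z : Vec n,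
        ee (dotp b (F x + F y + F z + F (x + y + z)))
        = ∑ x : Vec n, ∑ b : Vec n, ∑ y : Vec n, ∑ z : Vec n,
            ee (dotp b (F x + F y + F z + F (x + y + z))) := Finset.sum_comm
      _ = ∑ x : Vec n, ∑ y : Vec n, ∑ b : Vec n, ∑ z : Vec n,
            ee (dotp b (F x + F y + F z + F (x + y + z))) :=
          Finset.sum_congr rfl fun x _ => Finset.sum_comm
      _ = ∑ x : Vec n, ∑ y : Vec n, ∑ z : Vec n, ∑ b : Vec n,
            ee (dotp b (F x + F y + F z + F (x + y + z))) :=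
          Finset.sum_congr rfl fun x _ => Finset.sum_congr rfl fun y _ =>
            Finset.sum_comm
      _ = ∑ x : Vec n, ∑ y : Vec n, ∑ z : Vec n,
            (if F x + F y + F z + F (x + y + z) = 0 then (2:ℤ) ^ n else 0) :=
          Finset.sum_congr rfl fun x _ => Finset.sum_congr rfl fun y _ =>
            Finset.sum_congr rfl fun z _ => char_sum _
  have e2 : ∑ x : Vec n, ∑ y : Vec n, ∑ z : Vec n,
        (if F x + F y + F z + F (x + y + z) = 0 then (2:ℤ) ^ n else 0)
      = (2:ℤ) ^ n * ∑ x : Vec n, ∑ y : Vec n, ∑ z : Vec n,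
        (if F x + F y + F z + F (x + y + z) = 0 then (1:ℤ) else 0) := by
    rw [Finset.mul_sum]
    refine Finset.sum_congr rfl fun x _ => ?_
    rw [Finset.mul_sum]
    refine Finset.sum_congr rfl fun y _ => ?_
    rw [Finset.mul_sum]
    refine Finset.sum_congr rfl fun z _ => ?_
    split_ifs <;> ring
  have e0 : ∑ b : Vec n, ∑ a : Vec n, (Walsh F b a) ^ 4
      = 2 ^ n * ∑ b : Vec n, ∑ x : Vec n, ∑ y : Vec n, ∑ z : Vec n,
        ee (dotp b (F x + F y + F z + F (x + y + z))) := by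
    rw [Finset.mul_sum]
    exact Finset.sum_congr rfl fun b _ => fourth_b F b
  rw [e0, e1, e2, countC F ha]
  ring

lemma sum_b_zero {n : ℕ} (F : Vec n → Vec n) :
    ∑ a : Vec n, (Walsh F 0 a) ^ 4 = 2 ^ (4 * n) := by
  rw [fourth_b F 0]
  have h1 : ∀ v : Vec n, ee (dotp (0 : Vec n) v) = 1 := by
    intro v
    rw [dotp_zero_left]
    decide
  calc 2 ^ n * ∑ x : Vec n, ∑ y : Vec n, ∑ z : Vec n,
        ee (dotp (0:Vec n) (F x + F y + F z + F (x + y + z)))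
      = 2 ^ n * ∑ x : Vec n, ∑ y : Vec n, ∑ z : Vec n, (1:ℤ) := by
        exact congrArg _ (Finset.sum_congr rfl fun x _ => Finset.sum_congr rfl fun y _ =>
          Finset.sum_congr rfl fun z _ => h1 _)
    _ = 2 ^ (4 * n) := by
        simp only [Finset.sum_const, Finset.card_univ, card_vec, nsmul_eq_mul]
        push_cast
        ring

lemma sum_b_ne {n : ℕ} (F : Vec n → Vec n) (b : Vec n) (k : ℕ)
    (h : HasAmp F b k) :
    ∑ a : Vec n, (Walsh F b a) ^ 4 = 2 ^ (3 * n) * 2 ^ k := by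
  have h4 : ∀ a : Vec n, (Walsh F b a) ^ 4 = 2 ^ (n + k) * (Walsh F b a) ^ 2 := by
    intro a
    rcases h.1 a with h2 | h2
    · rw [show (Walsh F b a) ^ 4 = ((Walsh F b a) ^ 2) ^ 2 by ring, h2]
      simp
    · rw [show (Walsh F b a) ^ 4 = ((Walsh F b a) ^ 2) ^ 2 by ring, h2]
      ring
  rw [Finset.sum_congr rfl fun a _ => h4 a, ← Finset.mul_sum, parseval]
  rw [pow_add, show 3 * n = n + 2 * n by ring, pow_add]
  ring

theorem stmt_5 {n : ℕ} (hn : Even n) (F : Vec n → Vec n) (hq : IsQuadratic F)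
    (ha : IsAPN F) (l : Vec n → ℕ)
    (hl : ∀ b : Vec n, b ≠ 0 → HasAmp F b (l b)) :
    ∑ b ∈ Finset.univ.erase (0 : Vec n), 2 ^ (l b) = 2 * (2 ^ n - 1) := by
  have hsplit : ∑ a : Vec n, (Walsh F 0 a) ^ 4
        + ∑ b ∈ Finset.univ.erase (0 : Vec n), ∑ a : Vec n, (Walsh F b a) ^ 4
      = ∑ b : Vec n, ∑ a : Vec n, (Walsh F b a) ^ 4 :=
    Finset.add_sum_erase Finset.univ (fun b => ∑ a : Vec n, (Walsh F b a) ^ 4) (Finset.mem_univ (0 : Vec n))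
  rw [total_sum F ha, sum_b_zero F] at hsplit
  rw [Finset.sum_congr rfl (fun b hb =>
    sum_b_ne F b (l b) (hl b (Finset.ne_of_mem_erase hb)))] at hsplit
  rw [← Finset.mul_sum] at hsplit
  have hkey : (2:ℤ) ^ (3 * n) * ∑ b ∈ Finset.univ.erase (0 : Vec n), (2:ℤ) ^ (l b)
      = 2 ^ (3 * n) * (2 * ((2:ℤ) ^ n - 1)) := by linear_combination hsplit
  have hA : ∑ b ∈ Finset.univ.erase (0 : Vec n), (2:ℤ) ^ (l b)
      = 2 * ((2:ℤ) ^ n - 1) :=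
    mul_left_cancel₀ (pow_ne_zero _ two_ne_zero) hkey
  have h1 : (1:ℕ) ≤ 2 ^ n := Nat.one_le_two_pow
  have hfin : ((∑ b ∈ Finset.univ.erase (0 : Vec n), 2 ^ (l b) : ℕ) : ℤ)
      = ((2 * (2 ^ n - 1) : ℕ) : ℤ) := by
    push_cast [h1]
    rw [hA]
  exact Nat.cast_injective hfin
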